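/- Let F ⊆ E and let e ∈ F \ Ch_D(F). Then there exists a circuit C of M_D such that e ∈ C, C - e ⊆ Ch_D(F), and f ≻_D e for every element f ∈ C - e. -/

import Mathlib

variable {α : Type*}

/-- The rank (in `ℕ∞`) of a subset `X`: the largest size of an independent subset
of `X`. -/
noncomputable def erank (M : Matroid α) (X : Set α) : ℕ∞ :=
  ⨆ I ∈ {I : Set α | M.Indep I ∧ I ⊆ X}, I.encard

/-- A circuit of a matroid is an inclusion-wise minimal dependent set. -/
def Matroid.IsCircuit' (M : Matroid α) (C : Set α) : Prop :=
  M.Dep C ∧ ∀ ⦃D : Set α⦄, D ⊂ C → M.Indep D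

/-- The union of the levels `T 0, …, T (s-1)`. -/
def prevT (T : ℕ → Set α) (s : ℕ) : Set α := ⋃ j ∈ Finset.range s, T j

/-- The `≽`-maximal elements of `X`. -/
def heads (pref : α → α → Prop) (X : Set α) : Set α := {e ∈ X | ∀ f ∈ X, pref e f}

/-- The `≽`-minimal elements of `X`. -/
def tails (pref : α → α → Prop) (X : Set α) : Set α := {e ∈ X | ∀ f ∈ X, pref f e}

/-- `e ≻ f`: strict preference. -/
def SPref (pref : α → α → Prop) (e f : α) : Prop := pref e f ∧ ¬ pref f e

/-- The level decomposition of `F` produced by Algorithm 1: each level `T s`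
consists of the `≽`-maximal elements of what remains of `F` after removing the
earlier levels, and the levels exhaust `F`. -/
def IsLevels (pref : α → α → Prop) (F : Set α) (k : ℕ) (T : ℕ → Set α) : Prop :=
  prevT T k = F ∧ ∀ s < k, T s = heads pref (F \ prevT T s)

/-- Independence in the chain-decomposition matroid `M⟨F⟩` (the direct sum of the
minors `M_s = (M|(T 0 ∪ ⋯ ∪ T s)) / (T 0 ∪ ⋯ ∪ T (s-1))`): `I ⊆ F` and each
block `I ∩ T s` is independent in `M_s`, i.e. satisfies the contraction rank
condition `rk((I ∩ T s) ∪ prevT s) = rk(prevT s) + |I ∩ T s|`. -/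
def ChainIndep (M : Matroid α) (k : ℕ) (T : ℕ → Set α) (I : Set α) : Prop :=
  I ⊆ prevT T k ∧
  ∀ s < k, erank M ((I ∩ T s) ∪ prevT T s) = erank M (prevT T s) + (I ∩ T s).encard

/-- A base of the chain-decomposition matroid: a maximal independent set. -/
def ChainBase (M : Matroid α) (k : ℕ) (T : ℕ → Set α) (B : Set α) : Prop :=
  ChainIndep M k T B ∧ ∀ J : Set α, ChainIndep M k T J → B ⊆ J → J = B

/-- A circuit of the chain-decomposition matroid: a minimal dependent set. -/
def ChainCircuit (M : Matroid α) (k : ℕ) (T : ℕ → Set α) (C : Set α) : Prop :=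
  C ⊆ prevT T k ∧ ¬ ChainIndep M k T C ∧ ∀ ⦃D : Set α⦄, D ⊂ C → ChainIndep M k T D

/-- The greedy choice set `Ch(F)` (Algorithm 3): an element `e` of the level `T s`
belongs to `Ch(F)` iff `{e}` is independent in the contraction of `M` by the
earlier levels `T 0 ∪ ⋯ ∪ T (s-1)`. -/
def chooseSet (M : Matroid α) (k : ℕ) (T : ℕ → Set α) : Set α :=
  {e | ∃ s < k, e ∈ T s ∧ erank M ({e} ∪ prevT T s) = erank M (prevT T s) + 1}


open Set

section Aux

variable {M : Matroid α} {I X : Set α} {e : α}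

lemma encard_le_erank (hI : M.Indep I) (hIX : I ⊆ X) : I.encard ≤ erank M X :=
  le_iSup₂_of_le I ⟨hI, hIX⟩ le_rfl

lemma erank_le {b : ℕ∞} (h : ∀ I, M.Indep I → I ⊆ X → I.encard ≤ b) : erank M X ≤ b :=
  iSup₂_le fun I hI => h I hI.1 hI.2

lemma Matroid.IsBasis'.erank_eq (hI : M.IsBasis' I X) : erank M X = I.encard := by
  refine le_antisymm (erank_le fun J hJ hJX => ?_) (encard_le_erank hI.indep hI.subset)
  obtain ⟨K, hK, hJK⟩ := (Matroid.restrict_indep_iff.mpr ⟨hJ, hJX⟩).exists_isBase_superset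
  rw [Matroid.isBase_restrict_iff'] at hK
  exact (Set.encard_le_encard hJK).trans (hK.encard_eq_encard hI).le

lemma erank_insert_of_not_mem_closure (hX : X ⊆ M.E) (he : e ∈ M.E)
    (hecl : e ∉ M.closure X) : erank M (insert e X) = erank M X + 1 := by
  obtain ⟨I, hI⟩ := M.exists_isBasis' X
  have hclI : M.closure I = M.closure X := hI.closure_eq_closure
  have heI : e ∉ I := fun h => hecl (M.subset_closure X hX (hI.subset h))
  have hins : M.Indep (insert e I) :=
    (hI.indep.insert_indep_iff_of_notMem heI).mpr ⟨he, by rwa [hclI]⟩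
  have hB : M.IsBasis' (insert e I) (insert e X) := by
    rw [Matroid.isBasis'_iff_isBasis (insert_subset he hX),
      Matroid.isBasis_iff_indep_subset_closure]
    refine ⟨hins, insert_subset_insert hI.subset,
      insert_subset (M.mem_closure_of_mem (mem_insert _ _) hins.subset_ground) ?_⟩
    have h1 : X ⊆ M.closure I := hclI ▸ M.subset_closure X hX
    exact h1.trans (M.closure_subset_closure (subset_insert _ _))
  rw [hB.erank_eq, hI.erank_eq, Set.encard_insert_of_notMem heI]

lemma mem_closure_of_erank_ne (hX : X ⊆ M.E) (he : e ∈ M.E)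
    (h : erank M ({e} ∪ X) ≠ erank M X + 1) : e ∈ M.closure X := by
  by_contra hecl
  exact h (by rw [singleton_union]; exact erank_insert_of_not_mem_closure hX he hecl)

lemma exists_isCircuit' (hX : X ⊆ M.E) (heX : e ∉ X) (hecl : e ∈ M.closure X) :
    ∃ C, M.IsCircuit' C ∧ e ∈ C ∧ C ⊆ insert e X := by
  have heE : e ∈ M.E := M.mem_ground_of_mem_closure hecl
  obtain ⟨I, hI⟩ := M.exists_isBasis' X
  have hclI : M.closure I = M.closure X := hI.closure_eq_closure
  have heI : e ∉ I := fun h => heX (hI.subset h)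
  set J := {x ∈ I | e ∉ M.closure (I \ {x})} with hJdef
  have hJI : J ⊆ I := sep_subset _ _
  have hJind : M.Indep J := hI.indep.subset hJI
  have heJ : e ∉ J := fun h => heI (hJI h)
  have hecJ : e ∈ M.closure J := by
    rcases eq_or_ne (I \ J) ∅ with hd | hd
    · have : I ⊆ J := fun x hx => by
        by_contra hxJ
        exact (Set.eq_empty_iff_forall_notMem.mp hd x) ⟨hx, hxJ⟩
      rw [hJI.antisymm this, hclI]
      exact hecl
    · set Js : Set (Set α) := (fun x => I \ {x}) '' (I \ J) with hJs
      have hne : Js.Nonempty := (Set.nonempty_iff_ne_empty.mpr hd).image _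
      have hsub : ∀ K ∈ Js, K ⊆ I := by
        rintro K ⟨x, -, rfl⟩; exact diff_subset
      have hsInter : ⋂₀ Js = J := by
        apply Set.eq_of_subset_of_subset
        · intro y hy
          have hyI : y ∈ I := by
            obtain ⟨K, hK⟩ := hne
            exact hsub K hK (hy K hK)
          refine ⟨hyI, fun hycl => ?_⟩
          have hyIJ : y ∈ I \ J := ⟨hyI, fun hyJ => hyJ.2 hycl⟩
          have := hy _ ⟨y, hyIJ, rfl⟩
          exact this.2 rfl
        · intro y hy
          rintro K ⟨x, hx, rfl⟩
          refine ⟨hJI hy, fun hyx => ?_⟩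
          rw [mem_singleton_iff] at hyx
          subst hyx
          exact hx.2 hy
      have := hI.indep.closure_sInter_eq_biInter_closure_of_forall_subset hne hsub
      rw [hsInter] at this
      rw [this, Set.mem_iInter₂]
      rintro K ⟨x, hx, rfl⟩
      by_contra hcon
      exact hx.2 ⟨hx.1, hcon⟩
  refine ⟨insert e J, ⟨(hJind.insert_dep_iff).mpr ⟨hecJ, heJ⟩, ?_⟩, mem_insert _ _,
    insert_subset_insert (hJI.trans hI.subset)⟩
  intro D hD
  obtain ⟨y, hyC, hyD⟩ := exists_of_ssubset hD
  rcases eq_or_ne y e with rfl | hye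
  · have hDJ : D ⊆ J := by
      intro d hd
      rcases hD.subset hd with rfl | h
      · exact absurd hd hyD
      · exact h
    exact hJind.subset hDJ
  have hyJ : y ∈ J := (hyC.resolve_left hye)
  have hIy : M.Indep (insert e (I \ {y})) := by
    refine ((hI.indep.subset diff_subset).insert_indep_iff_of_notMem ?_).mpr ⟨heE, hyJ.2⟩
    exact fun h => heI h.1
  refine hIy.subset fun d hd => ?_
  rcases hD.subset hd with rfl | hdJ
  · exact mem_insert _ _
  · exact mem_insert_of_mem _ ⟨hJI hdJ, fun hdy => hyD (mem_singleton_iff.mp hdy ▸ hd)⟩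

lemma prevT_zero (T : ℕ → Set α) : prevT T 0 = ∅ := by simp [prevT]

lemma prevT_succ (T : ℕ → Set α) (s : ℕ) : prevT T (s + 1) = prevT T s ∪ T s := by
  simp [prevT, Finset.range_add_one, Set.union_comm]

lemma prevT_mono (T : ℕ → Set α) {s t : ℕ} (h : s ≤ t) : prevT T s ⊆ prevT T t :=
  Set.biUnion_subset_biUnion_left (by exact_mod_cast Finset.range_subset_range.mpr h)

lemma subset_prevT (T : ℕ → Set α) {s t : ℕ} (h : s < t) : T s ⊆ prevT T t :=
  Set.subset_biUnion_of_mem (u := T) (Finset.mem_range.mpr h)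

lemma spanning_chooseSet (M : Matroid α) (pref : α → α → Prop)
    (F : Set α) (hF : F ⊆ M.E) (k : ℕ) (T : ℕ → Set α) (hT : IsLevels pref F k T) :
    ∀ s, s ≤ k → prevT T s ⊆ M.closure (chooseSet M k T ∩ prevT T s) := by
  intro s
  induction s with
  | zero => intro _; rw [prevT_zero]; exact empty_subset _
  | succ n ih =>
    intro hnk
    have hnk' : n < k := hnk
    have hn := ih hnk'.le
    have hprevF : ∀ m, m ≤ k → prevT T m ⊆ F := fun m hm => hT.1 ▸ prevT_mono T hm
    have hPn : prevT T n ⊆ M.E := (hprevF n hnk'.le).trans hF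
    have hmono : M.closure (chooseSet M k T ∩ prevT T n) ⊆
        M.closure (chooseSet M k T ∩ prevT T (n + 1)) :=
      M.closure_subset_closure (inter_subset_inter_right _ (prevT_mono T n.le_succ))
    have hsubE : chooseSet M k T ∩ prevT T (n + 1) ⊆ M.E :=
      inter_subset_right.trans ((hprevF (n + 1) hnk).trans hF)
    intro f hf
    rw [prevT_succ] at hf
    rcases hf with hf | hf
    · exact hmono (hn hf)
    · by_cases hfc : f ∈ chooseSet M k T
      · exact M.subset_closure _ hsubE ⟨hfc, (prevT_succ T n) ▸ Or.inr hf⟩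
      · have hfE : f ∈ M.E := hF (hT.1 ▸ subset_prevT T hnk' hf)
        have hne : erank M ({f} ∪ prevT T n) ≠ erank M (prevT T n) + 1 :=
          fun h => hfc ⟨n, hnk', hf, h⟩
        have hfcl : f ∈ M.closure (prevT T n) := mem_closure_of_erank_ne hPn hfE hne
        exact hmono (M.closure_subset_closure_of_subset_closure hn hfcl)

end Aux

/-- Lemma 14: for every `e ∈ F \ Ch(F)` there exists a circuit `C` of `M` with
`e ∈ C`, `C - e ⊆ Ch(F)`, and `f ≻ e` for every `f ∈ C - e`. -/
theorem outside_chooseSet (M : Matroid α) (pref : α → α → Prop)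
    (htrans : Transitive pref)
    (htotal : ∀ e ∈ M.E, ∀ f ∈ M.E, pref e f ∨ pref f e)
    (hsingle : ∀ e ∈ M.E, M.Indep {e})
    (F : Set α) (hF : F ⊆ M.E) (k : ℕ) (T : ℕ → Set α)
    (hT : IsLevels pref F k T)
    (e : α) (he : e ∈ F \ chooseSet M k T) :
    ∃ C : Set α, M.IsCircuit' C ∧ e ∈ C ∧ C \ {e} ⊆ chooseSet M k T ∧
      ∀ f ∈ C \ {e}, SPref pref f e := by
  obtain ⟨heF, hech⟩ := he
  have hFk : prevT T k = F := hT.1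
  have heP : e ∈ prevT T k := hFk ▸ heF
  rw [prevT] at heP
  simp only [Set.mem_iUnion, Finset.mem_range, exists_prop] at heP
  obtain ⟨s, hsk, hes⟩ := heP
  have hePs : e ∉ prevT T s := by
    have := hT.2 s hsk
    have : e ∈ heads pref (F \ prevT T s) := this ▸ hes
    exact this.1.2
  have hPE : prevT T s ⊆ M.E := ((prevT_mono T hsk.le).trans hFk.subset).trans hF
  have heE : e ∈ M.E := hF heF
  have hecl : e ∈ M.closure (prevT T s) :=
    mem_closure_of_erank_ne hPE heE (fun h => hech ⟨s, hsk, hes, h⟩)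
  set G := chooseSet M k T ∩ prevT T s with hGdef
  have hGP : prevT T s ⊆ M.closure G :=
    spanning_chooseSet M pref F hF k T hT s hsk.le
  have heclG : e ∈ M.closure G := M.closure_subset_closure_of_subset_closure hGP hecl
  have hGE : G ⊆ M.E := inter_subset_right.trans hPE
  have heG : e ∉ G := fun h => hech h.1
  obtain ⟨C, hC, heC, hCsub⟩ := exists_isCircuit' hGE heG heclG
  have hCG : C \ {e} ⊆ G := by
    rintro f ⟨hfC, hfe⟩
    rcases hCsub hfC with rfl | h
    · exact absurd rfl hfe
    · exact h
  refine ⟨C, hC, heC, fun f hf => (hCG hf).1, fun f hf => ?_⟩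
  obtain ⟨hfc, hfP⟩ := hCG hf
  rw [prevT] at hfP
  simp only [Set.mem_iUnion, Finset.mem_range, exists_prop] at hfP
  obtain ⟨j, hjs, hfj⟩ := hfP
  have hjk : j < k := hjs.trans hsk
  have hTj : T j = heads pref (F \ prevT T j) := hT.2 j hjk
  have hePj : e ∉ prevT T j := fun h => hePs (prevT_mono T hjs.le h)
  have heFj : e ∈ F \ prevT T j := ⟨heF, hePj⟩
  have hfh : f ∈ heads pref (F \ prevT T j) := hTj ▸ hfj
  refine ⟨hfh.2 e heFj, fun hef => ?_⟩
  have heTj : e ∈ T j := by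
    rw [hTj]
    exact ⟨heFj, fun g hg => htrans hef (hfh.2 g hg)⟩
  exact hePs (subset_prevT T hjs heTj)
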